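/- arXiv:1610.08599 — 2 statements merged into one kernel-verified Lean document; each statement's English description precedes it below -/
import Mathlib

section
/- Let V = {(a₁,a₂,a₃,a₄) ∈ ℂ⁴ : a₁ + a₂ = a₃ + a₄} and for i = 1,2,3,4 let φᵢ : V → ℂ be the restriction to V of the i-th coordinate functional, so that φ₁ + φ₂ = φ₃ + φ₄ on V. Then there do not exist positive linear functionals φ̃₁, φ̃₂, φ̃₃, φ̃₄ : ℂ⁴ → ℂ with φ̃ᵢ restricted to V equal to φᵢ for each i and φ̃₁ + φ̃₂ = φ̃₃ + φ̃₄. -/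
open ComplexOrder

noncomputable section

/-- A linear functional on `ℓ₄^∞ = ℂ⁴` is positive if it maps entrywise-nonnegative vectors
to nonnegative reals (i.e. to complex numbers `≥ 0`). -/
def PosFun4 (f : (Fin 4 → ℂ) →ₗ[ℂ] ℂ) : Prop :=
  ∀ a : Fin 4 → ℂ, (∀ j, 0 ≤ a j) → 0 ≤ f a

/-- Let `V = {a ∈ ℂ⁴ : a₀ + a₁ = a₂ + a₃}` and let `φᵢ` be the restriction
to `V` of the `i`-th coordinate functional, so `φ₀ + φ₁ = φ₂ + φ₃` on `V`.  There are no
positive linear functionals `f i` on `ℂ⁴` extending the `φᵢ` with `f 0 + f 1 = f 2 + f 3`. -/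
theorem no_positive_riesz_extension_namioka_phelps :
    ¬ ∃ f : Fin 4 → ((Fin 4 → ℂ) →ₗ[ℂ] ℂ),
      (∀ i, PosFun4 (f i)) ∧
      (∀ i, ∀ a : Fin 4 → ℂ, a 0 + a 1 = a 2 + a 3 → f i a = a i) ∧
      f 0 + f 1 = f 2 + f 3 := by
  rintro ⟨f, hpos, hext, hsum⟩
  set g : Fin 4 → Fin 4 → ℂ := fun i j => f i (Pi.single j 1) with hg
  have hgpos : ∀ i j, 0 ≤ g i j := by
    intro i j
    apply hpos i
    intro k
    simp only [Pi.single_apply]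
    split
    · exact zero_le_one
    · exact le_refl 0
  have key : ∀ i (a : Fin 4 → ℂ),
      f i a = a 0 * g i 0 + a 1 * g i 1 + a 2 * g i 2 + a 3 * g i 3 := by
    intro i a
    have ha : a = a 0 • (Pi.single 0 1 : Fin 4 → ℂ) + a 1 • (Pi.single 1 1 : Fin 4 → ℂ)
        + a 2 • (Pi.single 2 1 : Fin 4 → ℂ) + a 3 • (Pi.single 3 1 : Fin 4 → ℂ) := by
      funext j
      fin_cases j <;> simp [Pi.single_apply]
    conv_lhs => rw [ha]
    simp only [map_add, map_smul, smul_eq_mul, hg]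
  have keyext : ∀ i (a : Fin 4 → ℂ), a 0 + a 1 = a 2 + a 3 →
      a 0 * g i 0 + a 1 * g i 1 + a 2 * g i 2 + a 3 * g i 3 = a i := by
    intro i a h
    rw [← key i a]; exact hext i a h
  -- equations from test vectors in V
  have eA : ∀ i, g i 0 - g i 1 = ![(1:ℂ),-1,0,0] i := by
    intro i
    have := keyext i ![(1:ℂ),-1,0,0] (by norm_num [Matrix.cons_val_zero, Matrix.cons_val_one, Matrix.head_cons, Matrix.cons_val_two, Matrix.tail_cons, Matrix.cons_val_three])
    simp only [Matrix.cons_val_zero, Matrix.cons_val_one, Matrix.head_cons, Matrix.cons_val_two, Matrix.tail_cons, Matrix.cons_val_three] at this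
    linear_combination this
  have eB : ∀ i, g i 0 + g i 2 = ![(1:ℂ),0,1,0] i := by
    intro i
    have := keyext i ![(1:ℂ),0,1,0] (by norm_num [Matrix.cons_val_zero, Matrix.cons_val_one, Matrix.head_cons, Matrix.cons_val_two, Matrix.tail_cons, Matrix.cons_val_three])
    simp only [Matrix.cons_val_zero, Matrix.cons_val_one, Matrix.head_cons, Matrix.cons_val_two, Matrix.tail_cons, Matrix.cons_val_three] at this
    linear_combination this
  have eC : ∀ i, g i 1 + g i 2 = ![(0:ℂ),1,1,0] i := by
    intro i
    have := keyext i ![(0:ℂ),1,1,0] (by norm_num [Matrix.cons_val_zero, Matrix.cons_val_one, Matrix.head_cons, Matrix.cons_val_two, Matrix.tail_cons, Matrix.cons_val_three])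
    simp only [Matrix.cons_val_zero, Matrix.cons_val_one, Matrix.head_cons, Matrix.cons_val_two, Matrix.tail_cons, Matrix.cons_val_three] at this
    linear_combination this
  have eD : ∀ i, g i 0 + g i 3 = ![(1:ℂ),0,0,1] i := by
    intro i
    have := keyext i ![(1:ℂ),0,0,1] (by norm_num [Matrix.cons_val_zero, Matrix.cons_val_one, Matrix.head_cons, Matrix.cons_val_two, Matrix.tail_cons, Matrix.cons_val_three])
    simp only [Matrix.cons_val_zero, Matrix.cons_val_one, Matrix.head_cons, Matrix.cons_val_two, Matrix.tail_cons, Matrix.cons_val_three] at this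
    linear_combination this
  have eE : ∀ i, g i 2 - g i 3 = ![(0:ℂ),0,1,-1] i := by
    intro i
    have := keyext i ![(0:ℂ),0,1,-1] (by norm_num [Matrix.cons_val_zero, Matrix.cons_val_one, Matrix.head_cons, Matrix.cons_val_two, Matrix.tail_cons, Matrix.cons_val_three])
    simp only [Matrix.cons_val_zero, Matrix.cons_val_one, Matrix.head_cons, Matrix.cons_val_two, Matrix.tail_cons, Matrix.cons_val_three] at this
    linear_combination this
  -- helper: nonneg summing to zero are zero
  have zero_of : ∀ a b : ℂ, 0 ≤ a → 0 ≤ b → a + b = 0 → a = 0 := by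
    intro a b ha hb hab
    have := (add_eq_zero_iff_of_nonneg ha hb).mp hab
    exact this.1
  -- f 0 : g 0 0 = 1
  have h01 : g 0 1 + g 0 2 = 0 := by
    have h1 := eA 0; have h2 := eB 0
    simp at h1 h2
    linear_combination h2 - h1
  have hg01 : g 0 1 = 0 := zero_of _ _ (hgpos 0 1) (hgpos 0 2) h01
  have hg00 : g 0 0 = 1 := by
    have h1 := eA 0; simp at h1; linear_combination h1 + hg01
  -- f 1 : g 1 0 = 0
  have h10 : g 1 0 + g 1 2 = 0 := by
    have h1 := eA 1; have h2 := eC 1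
    simp at h1 h2
    linear_combination h1 + h2
  have hg10 : g 1 0 = 0 := zero_of _ _ (hgpos 1 0) (hgpos 1 2) h10
  -- f 2 : g 2 0 = 0
  have h20 : g 2 0 + g 2 3 = 0 := by
    have h1 := eE 2; have h2 := eB 2
    simp at h1 h2
    linear_combination h2 - h1
  have hg20 : g 2 0 = 0 := zero_of _ _ (hgpos 2 0) (hgpos 2 3) h20
  -- f 3 : g 3 0 = 0
  have h30 : g 3 0 + g 3 2 = 0 := by
    have h1 := eE 3; have h2 := eD 3
    simp at h1 h2
    linear_combination h1 + h2
  have hg30 : g 3 0 = 0 := zero_of _ _ (hgpos 3 0) (hgpos 3 2) h30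
  -- evaluate the sum condition at e₀
  have hs : g 0 0 + g 1 0 = g 2 0 + g 3 0 := by
    have := congrArg (fun φ => φ (Pi.single (0 : Fin 4) (1 : ℂ))) hsum
    simpa [hg] using this
  rw [hg00, hg10, hg20, hg30] at hs
  norm_num at hs
end
end

section
/- Let V = {(a₁,a₂,a₃,a₄) ∈ ℂ⁴ : a₁ + a₂ = a₃ + a₄}. There is no unital positive linear map γ : ℂ⁴ → ℂ⁴ whose image is contained in V and whose restriction to V is the identity map of V; equivalently, there is no unital positive linear projection from ℓ₄^∞ onto V. -/
open ComplexOrder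

noncomputable section

/-- Let `V = {a ∈ ℂ⁴ : a₀ + a₁ = a₂ + a₃}` (the Namioka–Phelps test
system inside `ℓ₄^∞ = ℂ⁴`).  There is no unital positive linear map `γ : ℂ⁴ → ℂ⁴` whose
image is contained in `V` and whose restriction to `V` is the identity, i.e. no unital
positive linear projection of `ℓ₄^∞` onto `V`. -/
theorem no_positive_unital_projection_onto_namioka_phelps :
    ¬ ∃ γ : (Fin 4 → ℂ) →ₗ[ℂ] (Fin 4 → ℂ),
      (∀ a : Fin 4 → ℂ, (∀ i, 0 ≤ a i) → ∀ i, 0 ≤ γ a i) ∧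
      γ (fun _ => 1) = (fun _ => 1) ∧
      (∀ a : Fin 4 → ℂ, γ a 0 + γ a 1 = γ a 2 + γ a 3) ∧
      (∀ a : Fin 4 → ℂ, a 0 + a 1 = a 2 + a 3 → γ a = a) := by
  rintro ⟨γ, hpos, -, hV, hfix⟩
  have h1 : γ ![1,0,1,0] = ![1,0,1,0] := hfix _ (by simp [Matrix.cons_val])
  have h2 : γ ![1,0,0,1] = ![1,0,0,1] := hfix _ (by simp [Matrix.cons_val])
  have h3 : γ ![1,1,1,1] = ![1,1,1,1] := hfix _ (by simp [Matrix.cons_val])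
  set u := γ ![1,0,0,0] with hu
  have he2 : γ ![0,0,1,0] = ![1,0,1,0] - u := by
    have h : (![0,0,1,0] : Fin 4 → ℂ) = ![1,0,1,0] - ![1,0,0,0] := by
      funext i; fin_cases i <;> simp
    rw [h, map_sub, h1, ← hu]
  have he3 : γ ![0,0,0,1] = ![1,0,0,1] - u := by
    have h : (![0,0,0,1] : Fin 4 → ℂ) = ![1,0,0,1] - ![1,0,0,0] := by
      funext i; fin_cases i <;> simp
    rw [h, map_sub, h2, ← hu]
  have he1 : γ ![0,1,0,0] = ![1,1,1,1] - ![1,0,1,0] - ![1,0,0,1] + u := by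
    have h : (![0,1,0,0] : Fin 4 → ℂ)
        = ![1,1,1,1] - ![1,0,1,0] - ![1,0,0,1] + ![1,0,0,0] := by
      funext i; fin_cases i <;> norm_num
    rw [h, map_add, map_sub, map_sub, h1, h2, h3, ← hu]
  have p0 : ∀ i, 0 ≤ u i := by
    rw [hu]; exact hpos _ (by intro i; fin_cases i <;> norm_num)
  have p1 := hpos ![0,1,0,0] (by intro i; fin_cases i <;> norm_num)
  have p2 := hpos ![0,0,1,0] (by intro i; fin_cases i <;> norm_num)
  have p3 := hpos ![0,0,0,1] (by intro i; fin_cases i <;> norm_num)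
  rw [he1] at p1
  rw [he2] at p2
  rw [he3] at p3
  have hu0 : u 0 = 1 := by
    have a1 : (0:ℂ) ≤ u 0 - 1 := by simpa using p1 0
    have a2 : (0:ℂ) ≤ 1 - u 0 := by simpa using p2 0
    have := sub_nonneg.mp a1
    have := sub_nonneg.mp a2
    exact le_antisymm ‹u 0 ≤ 1› ‹1 ≤ u 0›
  have hu1 : u 1 = 0 := by
    have a2 : (0:ℂ) ≤ -u 1 := by simpa using p2 1
    exact le_antisymm (neg_nonneg.mp a2) (p0 1)
  have hu2 : u 2 = 0 := by
    have a3 : (0:ℂ) ≤ -u 2 := by simpa using p3 2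
    exact le_antisymm (neg_nonneg.mp a3) (p0 2)
  have hu3 : u 3 = 0 := by
    have a2 : (0:ℂ) ≤ -u 3 := by simpa using p2 3
    exact le_antisymm (neg_nonneg.mp a2) (p0 3)
  have hVu := hV ![1,0,0,0]
  rw [← hu, hu0, hu1, hu2, hu3] at hVu
  norm_num at hVu
end
end
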